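/- Let A ∈ L(X,Y) be injective with closed range, set H = A*A and A† = (A*A)⁻¹A*, and let φ : X → ℝ ∪ {+∞} be proper, convex and lower semicontinuous. Then for every x ∈ X, if x̄ ∈ X minimizes z ↦ φ(z) + ½‖A(z − x)‖² over X, then A x̄ minimizes t ↦ φ(A†t) + ½‖t − Ax‖² over Y, and x̄ = A†(A x̄). That is, prox_φ^H = A† ∘ prox_{φ∘A†} ∘ A. -/

import Mathlib

open ContinuousLinearMap

/-- `prox_φ^{A*A} = A† ∘ prox_{φ∘A†} ∘ A`: if `A` is injective with closed range
(`S` the inverse of `A*A`, `A† = (A*A)⁻¹A* = S A*`), `φ` is proper convex lower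
semicontinuous, and `x̄` minimizes `z ↦ φ(z) + ½‖A(z − x)‖²` over `X`, then `A x̄`
minimizes `t ↦ φ(A†t) + ½‖t − Ax‖²` over `Y`, and `x̄ = A†(A x̄)`. -/
theorem stmt_7 {X Y : Type*} [NormedAddCommGroup X] [InnerProductSpace ℝ X] [CompleteSpace X]
    [NormedAddCommGroup Y] [InnerProductSpace ℝ Y] [CompleteSpace Y]
    (A : X →L[ℝ] Y)
    (hAinj : Function.Injective A) (hAcl : IsClosed (Set.range A))
    (S : X →L[ℝ] X)
    (hS1 : S ∘L (adjoint A ∘L A) = 1) (hS2 : (adjoint A ∘L A) ∘L S = 1)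
    (Adag : Y →L[ℝ] X) (hAdag : Adag = S ∘L adjoint A)
    (φ : X → WithTop ℝ)
    (hproper : ∃ x, φ x ≠ ⊤)
    (hconv : ∀ x y : X, ∀ a b : ℝ, 0 ≤ a → 0 ≤ b → a + b = 1 →
      φ (a • x + b • y) ≤ (a : WithTop ℝ) * φ x + (b : WithTop ℝ) * φ y)
    (hlsc : LowerSemicontinuous φ)
    (x xbar : X)
    (hxbar : ∀ z : X, φ xbar + ((2⁻¹ * ‖A (xbar - x)‖ ^ 2 : ℝ) : WithTop ℝ)
        ≤ φ z + ((2⁻¹ * ‖A (z - x)‖ ^ 2 : ℝ) : WithTop ℝ)) :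
    (∀ t : Y, φ (Adag (A xbar)) + ((2⁻¹ * ‖A xbar - A x‖ ^ 2 : ℝ) : WithTop ℝ)
        ≤ φ (Adag t) + ((2⁻¹ * ‖t - A x‖ ^ 2 : ℝ) : WithTop ℝ)) ∧
    xbar = Adag (A xbar) := by
  -- Adag (A z) = z for all z
  have hdagA : ∀ z : X, Adag (A z) = z := by
    intro z
    have := congrArg (fun T : X →L[ℝ] X => T z) hS1
    simpa [hAdag, ContinuousLinearMap.comp_apply] using this
  have key : ∀ t : Y, ‖A (Adag t) - A x‖ ^ 2 ≤ ‖t - A x‖ ^ 2 := by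
    intro t
    set u := t - A (Adag t) with hu
    set v := A (Adag t) - A x with hv
    have hAu : adjoint A u = 0 := by
      have h2 := congrArg (fun T : X →L[ℝ] X => T (adjoint A t)) hS2
      simp only [ContinuousLinearMap.comp_apply, ContinuousLinearMap.one_apply] at h2
      simp [hu, map_sub, hAdag, ContinuousLinearMap.comp_apply, h2]
    have horth : (inner ℝ u v : ℝ) = 0 := by
      have : v = A (Adag t - x) := by simp [hv, map_sub]
      rw [this, ← ContinuousLinearMap.adjoint_inner_left, hAu, inner_zero_left]
    have hsum : t - A x = u + v := by simp [hu, hv]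
    have : ‖t - A x‖ ^ 2 = ‖u‖ ^ 2 + ‖v‖ ^ 2 := by
      rw [hsum, ← real_inner_self_eq_norm_sq, inner_add_add_self,
        real_inner_self_eq_norm_sq, real_inner_self_eq_norm_sq]
      have horth2 : (inner ℝ v u : ℝ) = 0 := by rw [real_inner_comm]; exact horth
      rw [horth, horth2]
      ring
    rw [this]
    nlinarith [sq_nonneg ‖u‖]
  constructor
  · intro t
    rw [hdagA xbar]
    have h1 : φ xbar + ((2⁻¹ * ‖A (xbar - x)‖ ^ 2 : ℝ) : WithTop ℝ)
        ≤ φ (Adag t) + ((2⁻¹ * ‖A (Adag t - x)‖ ^ 2 : ℝ) : WithTop ℝ) := hxbar (Adag t)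
    have h2 : ((2⁻¹ * ‖A (Adag t - x)‖ ^ 2 : ℝ) : WithTop ℝ)
        ≤ ((2⁻¹ * ‖t - A x‖ ^ 2 : ℝ) : WithTop ℝ) := by
      have := key t
      rw [← map_sub] at this
      exact_mod_cast by nlinarith
    have hAx : ‖A xbar - A x‖ = ‖A (xbar - x)‖ := by rw [map_sub]
    rw [hAx]
    exact h1.trans (add_le_add_right h2 _)
  · exact (hdagA xbar).symm
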